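/- There exists a constant c₁ > 0 (depending on d, r, p, A) such that for every x with r ≤ ‖x‖ ≤ 1 and every s ∈ (0, 1 − r], ∫_{B(x,s)} f(y) dy ≥ c₁ s^{p+d}. -/

import Mathlib

open MeasureTheory

/-- cf. eq. (34) of Iyer–Thacker: for the polynomially vanishing annulus
density `f(y) = A(‖y‖ − r)^p` for `r ≤ ‖y‖ ≤ 1` (and `0` otherwise) on Euclidean `ℝ^d`,
there is `c₁ > 0` with `∫_{B(x,s)} f ≥ c₁ s^{p+d}` for every `x` in the annulus and every
`0 < s ≤ 1 − r`. -/
theorem annulus_density_ball_lower_bound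
    (d : ℕ) (hd : 1 ≤ d) (r : ℝ) (hr0 : 0 < r) (hr1 : r < 1)
    (p : ℕ) (hp : 1 ≤ p) (A : ℝ) (hA : 0 < A)
    (f : EuclideanSpace ℝ (Fin d) → ℝ)
    (hf : ∀ y, f y = if r ≤ ‖y‖ ∧ ‖y‖ ≤ 1 then A * (‖y‖ - r) ^ p else 0) :
    ∃ c₁ : ℝ, 0 < c₁ ∧
      ∀ x : EuclideanSpace ℝ (Fin d), r ≤ ‖x‖ → ‖x‖ ≤ 1 →
        ∀ s : ℝ, 0 < s → s ≤ 1 - r →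
          c₁ * s ^ (p + d) ≤ ∫ y in Metric.ball x s, f y := by
  haveI : Nontrivial (EuclideanSpace ℝ (Fin d)) := by
    refine Module.nontrivial_of_finrank_pos (R := ℝ) ?_
    rw [finrank_euclideanSpace_fin]; omega
  set v : ℝ := (volume (Metric.ball (0 : EuclideanSpace ℝ (Fin d)) 1)).toReal with hv
  have hv0 : 0 < v := by
    refine ENNReal.toReal_pos ?_ measure_ball_lt_top.ne
    exact (Metric.measure_ball_pos volume _ one_pos).ne'
  -- nonnegativity of f
  have hfnn : ∀ y, 0 ≤ f y := by
    intro y; rw [hf]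
    split_ifs with h
    · exact mul_nonneg hA.le (pow_nonneg (by linarith [h.1]) p)
    · exact le_refl 0
  -- f is bounded by A
  have hfbd : ∀ y, ‖f y‖ ≤ A := by
    intro y; rw [Real.norm_eq_abs, abs_of_nonneg (hfnn y), hf]
    split_ifs with h
    · have h1 : ‖y‖ - r ≤ 1 := by linarith [h.2]
      have h0 : (0:ℝ) ≤ ‖y‖ - r := by linarith [h.1]
      calc A * (‖y‖ - r) ^ p ≤ A * 1 ^ p := by
            exact mul_le_mul_of_nonneg_left (pow_le_pow_left₀ h0 h1 p) hA.le
        _ = A := by ring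
    · exact hA.le
  -- measurability of f
  have hfm : Measurable f := by
    have : f = fun y => Set.indicator {y : EuclideanSpace ℝ (Fin d) | r ≤ ‖y‖ ∧ ‖y‖ ≤ 1}
        (fun y => A * (‖y‖ - r) ^ p) y := by
      funext y; rw [hf, Set.indicator_apply]; rfl
    rw [this]
    apply Measurable.indicator
    · exact (measurable_const.mul ((measurable_norm.sub measurable_const).pow measurable_const))
    · exact (measurableSet_le measurable_const measurable_norm).inter
        (measurableSet_le measurable_norm measurable_const)
  refine ⟨A * (8⁻¹) ^ p * ((8⁻¹) ^ d * v), by positivity, ?_⟩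
  intro x hxr hx1 s hs0 hs1
  have hx0 : 0 < ‖x‖ := lt_of_lt_of_le hr0 hxr
  set t : ℝ := min (max ‖x‖ (r + s / 4)) (1 - s / 8) with ht
  have hrs : r + s / 4 ≤ 1 - s / 8 := by linarith
  have ht1 : r + s / 4 ≤ t := le_min (le_max_right _ _) hrs
  have ht2 : t ≤ 1 - s / 8 := min_le_right _ _
  have ht3 : t ≤ ‖x‖ + s / 4 := le_trans (min_le_left _ _) (max_le (by linarith) (by linarith))
  have ht4 : ‖x‖ - s / 8 ≤ t := by
    refine le_min (le_trans (by linarith) (le_max_left _ _)) (by linarith)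
  have ht0 : 0 < t := lt_of_lt_of_le (by linarith) ht1
  set z : EuclideanSpace ℝ (Fin d) := (t / ‖x‖) • x with hz
  have hznorm : ‖z‖ = t := by
    rw [hz, norm_smul, Real.norm_eq_abs, abs_of_pos (div_pos ht0 hx0)]
    field_simp
  have hzx : ‖z - x‖ ≤ s / 4 := by
    have : z - x = (t / ‖x‖ - 1) • x := by rw [hz, sub_smul, one_smul]
    rw [this, norm_smul, Real.norm_eq_abs]
    have : |t / ‖x‖ - 1| * ‖x‖ = |t - ‖x‖| := by
      rw [← abs_of_pos hx0, ← abs_mul]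
      congr 1; field_simp; rw [abs_of_pos hx0]; ring
    rw [this, abs_le]
    constructor <;> [linarith; linarith]
  -- the small ball
  have hsub : Metric.ball z (s / 8) ⊆ Metric.ball x s := by
    intro y hy
    rw [Metric.mem_ball] at hy ⊢
    have : dist y x ≤ dist y z + dist z x := dist_triangle y z x
    rw [dist_eq_norm] at *
    calc ‖y - x‖ ≤ ‖y - z‖ + ‖z - x‖ := by
          simpa [dist_eq_norm] using dist_triangle y z x
      _ < s / 8 + s / 4 := by linarith
      _ ≤ s := by linarith
  have hlow : ∀ y ∈ Metric.ball z (s / 8), A * (s / 8) ^ p ≤ f y := by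
    intro y hy
    rw [Metric.mem_ball, dist_eq_norm] at hy
    have h1 : ‖y‖ ≤ 1 := by
      have := norm_le_norm_add_norm_sub' y z
      calc ‖y‖ ≤ ‖z‖ + ‖y - z‖ := by
            have := norm_sub_norm_le y z; linarith [norm_sub_norm_le y z]
        _ ≤ t + s / 8 := by rw [hznorm]; linarith
        _ ≤ 1 := by linarith
    have h2 : r + s / 8 ≤ ‖y‖ := by
      have h3 : ‖z‖ - ‖y - z‖ ≤ ‖y‖ := by
        have := norm_sub_norm_le z y
        have hyz : ‖z - y‖ = ‖y - z‖ := norm_sub_rev z y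
        linarith
      rw [hznorm] at h3
      linarith
    rw [hf]
    rw [if_pos ⟨by linarith, h1⟩]
    refine mul_le_mul_of_nonneg_left ?_ hA.le
    exact pow_le_pow_left₀ (by linarith) (by linarith) p
  -- integrability
  have hint : IntegrableOn f (Metric.ball x s) volume :=
    Measure.integrableOn_of_bounded measure_ball_lt_top.ne hfm.aestronglyMeasurable
      (Filter.Eventually.of_forall fun y => hfbd y)
  have hint' : IntegrableOn f (Metric.ball z (s / 8)) volume := hint.mono_set hsub
  have step1 : ∫ y in Metric.ball z (s / 8), f y ≤ ∫ y in Metric.ball x s, f y := by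
    refine setIntegral_mono_set hint (Filter.Eventually.of_forall hfnn)
      (Filter.Eventually.of_forall hsub)
  have step2 : A * (s / 8) ^ p * (volume (Metric.ball z (s / 8))).toReal
      ≤ ∫ y in Metric.ball z (s / 8), f y :=
    by have h := setIntegral_ge_of_const_le_real measurableSet_ball measure_ball_lt_top.ne hlow hint'
       rw [measureReal_def] at h; exact h
  have hvol : (volume (Metric.ball z (s / 8))).toReal = (s / 8) ^ d * v := by
    rw [Measure.addHaar_ball volume z (by linarith : (0:ℝ) ≤ s / 8),
      finrank_euclideanSpace_fin, ENNReal.toReal_mul,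
      ENNReal.toReal_ofReal (by positivity)]
  rw [hvol] at step2
  have : A * (8⁻¹) ^ p * ((8⁻¹) ^ d * v) * s ^ (p + d)
      = A * (s / 8) ^ p * ((s / 8) ^ d * v) := by
    rw [pow_add]; field_simp; ring
  rw [this]
  calc A * (s / 8) ^ p * ((s / 8) ^ d * v)
      = A * (s / 8) ^ p * ((s / 8) ^ d * v) := rfl
    _ ≤ ∫ y in Metric.ball z (s / 8), f y := by
        rw [← mul_assoc] at step2 ⊢; linarith
    _ ≤ ∫ y in Metric.ball x s, f y := step1
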